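/- Fix integers $L \ge 2$ and a parameter $K \ge 2^{16 L^2}$. With $x_\ell = K^{8^{L-\ell-1}}$, $n_\ell = K^{4 \cdot 8^{L-\ell-1}}$, $\Delta_\ell = 2^{4\sqrt{K} (x_0 \cdots x_{\ell-2})(n_1 \cdots n_{L-1})}$ for $\ell \in [2, L]$, and $\Theta_\ell = 8^{-L\ell} (x_0 \cdots x_\ell)(n_1 \cdots n_{\ell-1})$ for $\ell \in [1, L-1]$, the following inequality holds for all $\ell \in [2, L-1]$: $\Delta_\ell^2 \le 2^{8^{-L\ell} \cdot n_{\ell-1} (x_0 \cdots x_{\ell-1})(n_1 \cdots n_{\ell-2})} \le 2^{n_{\ell-1} \Theta_{\ell-1}}$. -/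

import Mathlib

private lemma geo7 (a d : ℕ) :
    7 * (∑ i ∈ Finset.Ioc a (a + d), 8 ^ (a + d - i)) + 1 = 8 ^ d := by
  induction d with
  | zero => simp
  | succ d ih =>
      have h1 : ∑ i ∈ Finset.Ioc a (a + (d + 1)), 8 ^ (a + (d + 1) - i)
          = (∑ i ∈ Finset.Ioc a (a + d), 8 ^ (a + (d + 1) - i))
            + 8 ^ (a + (d + 1) - (a + d + 1)) := by
        have he : a + (d + 1) = (a + d) + 1 := by omega
        rw [he, Finset.sum_Ioc_succ_top (by omega)]
      have h2 : ∑ i ∈ Finset.Ioc a (a + d), 8 ^ (a + (d + 1) - i)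
          = 8 * ∑ i ∈ Finset.Ioc a (a + d), 8 ^ (a + d - i) := by
        rw [Finset.mul_sum]
        refine Finset.sum_congr rfl fun i hi => ?_
        simp only [Finset.mem_Ioc] at hi
        have : a + (d + 1) - i = (a + d - i) + 1 := by omega
        rw [this, pow_succ]; ring
      have h3 : a + (d + 1) - (a + d + 1) = 0 := by omega
      rw [h1, h2, h3, pow_zero, pow_succ]
      linarith

/-- Key parameter inequality relating the entropy-loss parameters `Δ_ℓ` to the
cover-size parameters `Θ_ℓ` under the doubly-exponential hierarchy in `K`:
`Δ_ℓ² ≤ 2^{8^{-Lℓ} n_{ℓ-1}(x₀⋯x_{ℓ-1})(n₁⋯n_{ℓ-2})} ≤ 2^{n_{ℓ-1} Θ_{ℓ-1}}`. -/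
theorem stmt_9 (L : ℕ) (hL : 2 ≤ L) (K : ℕ) (hK : 2 ^ (16 * L ^ 2) ≤ K)
    (x nn : ℕ → ℕ)
    (hx : ∀ ℓ, x ℓ = K ^ (8 ^ (L - ℓ - 1)))
    (hn : ∀ ℓ, nn ℓ = K ^ (4 * 8 ^ (L - ℓ - 1)))
    (Δ Θ : ℕ → ℝ)
    (hΔ : ∀ ℓ, Δ ℓ = (2 : ℝ) ^ (4 * Real.sqrt K *
      (∏ i ∈ Finset.range (ℓ - 1), (x i : ℝ)) * (∏ i ∈ Finset.Icc 1 (L - 1), (nn i : ℝ))))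
    (hΘ : ∀ ℓ, Θ ℓ = (8 : ℝ) ^ (-((L * ℓ : ℕ) : ℝ)) *
      (∏ i ∈ Finset.range (ℓ + 1), (x i : ℝ)) * (∏ i ∈ Finset.Icc 1 (ℓ - 1), (nn i : ℝ))) :
    ∀ ℓ ∈ Finset.Icc 2 (L - 1),
      (Δ ℓ) ^ 2 ≤ (2 : ℝ) ^ ((8 : ℝ) ^ (-((L * ℓ : ℕ) : ℝ)) * (nn (ℓ - 1) : ℝ) *
          (∏ i ∈ Finset.range ℓ, (x i : ℝ)) * (∏ i ∈ Finset.Icc 1 (ℓ - 2), (nn i : ℝ)))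
      ∧ (2 : ℝ) ^ ((8 : ℝ) ^ (-((L * ℓ : ℕ) : ℝ)) * (nn (ℓ - 1) : ℝ) *
          (∏ i ∈ Finset.range ℓ, (x i : ℝ)) * (∏ i ∈ Finset.Icc 1 (ℓ - 2), (nn i : ℝ)))
        ≤ (2 : ℝ) ^ ((nn (ℓ - 1) : ℝ) * Θ (ℓ - 1)) := by
  intro ℓ hℓ
  simp only [Finset.mem_Icc] at hℓ
  obtain ⟨k, rfl⟩ : ∃ k, ℓ = k + 2 := ⟨ℓ - 2, by omega⟩
  have hkL : k + 3 ≤ L := by omega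
  have hKnat : 0 < K := lt_of_lt_of_le (pow_pos (by norm_num) _) hK
  have hK1 : (1 : ℝ) ≤ (K : ℝ) := by exact_mod_cast hKnat
  have hK0 : (0 : ℝ) ≤ (K : ℝ) := by linarith
  have hxpos : ∀ i, (0 : ℝ) < (x i : ℝ) := fun i => by
    rw [hx]; exact_mod_cast pow_pos hKnat _
  have hnnpos : ∀ i, (0 : ℝ) < (nn i : ℝ) := fun i => by
    rw [hn]; exact_mod_cast pow_pos hKnat _
  have hsub1 : k + 2 - 1 = k + 1 := by omega
  have hsub2 : k + 2 - 2 = k := by omega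
  rw [hsub1, hsub2]
  set A : ℝ := ∏ i ∈ Finset.range (k + 1), (x i : ℝ) with hA
  set A2 : ℝ := ∏ i ∈ Finset.range (k + 2), (x i : ℝ) with hA2
  set B : ℝ := ∏ i ∈ Finset.Icc 1 (L - 1), (nn i : ℝ) with hB
  set B2 : ℝ := ∏ i ∈ Finset.Icc 1 k, (nn i : ℝ) with hB2
  set C : ℝ := ∏ i ∈ Finset.Ioc (k + 1) (L - 1), (nn i : ℝ) with hC
  have hApos : (0 : ℝ) < A := Finset.prod_pos (fun i _ => hxpos i)
  have hB2pos : (0 : ℝ) < B2 := Finset.prod_pos (fun i _ => hnnpos i)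
  have hCpos : (0 : ℝ) < C := Finset.prod_pos (fun i _ => hnnpos i)
  have hnpos : (0 : ℝ) < (nn (k + 1) : ℝ) := hnnpos _
  have hA2split : A2 = A * (x (k + 1) : ℝ) := Finset.prod_range_succ _ _
  have hA2pos : (0 : ℝ) < A2 := by rw [hA2split]; exact mul_pos hApos (hxpos _)
  have hBsplit : B = B2 * ((nn (k + 1) : ℝ) * C) := by
    rw [hB, hB2, hC, show (1 : ℕ) = 0 + 1 from rfl, Finset.Icc_add_one_left_eq_Ioc, Finset.Icc_add_one_left_eq_Ioc]
    rw [← Finset.prod_Ioc_consecutive (fun i => (nn i : ℝ)) (Nat.zero_le k)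
      (show k ≤ L - 1 by omega)]
    congr 1
    rw [← Finset.prod_Ioc_consecutive (fun i => (nn i : ℝ)) (show k ≤ k + 1 by omega)
      (show k + 1 ≤ L - 1 by omega)]
    congr 1
    rw [Finset.prod_Ioc_succ_top (le_refl k)]
    simp
  set P : ℝ := (8 : ℝ) ^ (L * (k + 2)) with hP
  have hPpos : (0 : ℝ) < P := by positivity
  have hPne : P ≠ 0 := ne_of_gt hPpos
  have hrw8 : (8 : ℝ) ^ (-((L * (k + 2) : ℕ) : ℝ)) = P⁻¹ := by
    rw [Real.rpow_neg (by norm_num), Real.rpow_natCast]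
  have hPK : P * 8 ≤ (K : ℝ) := by
    have h1 : (8 : ℕ) ^ (L * (k + 2)) * 8 = 2 ^ (3 * (L * (k + 2)) + 3) := by
      rw [show (8 : ℕ) = 2 ^ 3 from rfl, ← pow_mul, ← pow_add]
    have h2 : 3 * (L * (k + 2)) + 3 ≤ 16 * L ^ 2 := by nlinarith [hkL, hℓ.2, hL]
    have h3 : (8 : ℕ) ^ (L * (k + 2)) * 8 ≤ K := by
      rw [h1]; exact le_trans (Nat.pow_le_pow_right (by norm_num) h2) hK
    calc P * 8 = ((8 ^ (L * (k + 2)) * 8 : ℕ) : ℝ) := by push_cast [hP]; ring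
      _ ≤ (K : ℝ) := by exact_mod_cast h3
  have hsqrtK : Real.sqrt K ≤ (K : ℝ) := by
    rw [Real.sqrt_le_left hK0]; nlinarith
  set m : ℕ := L - k - 2 with hm
  have hm1 : 1 ≤ m := by omega
  have hCeq : C = (K : ℝ) ^ (∑ i ∈ Finset.Ioc (k + 1) (L - 1), 4 * 8 ^ (L - i - 1)) := by
    rw [hC, ← Finset.prod_pow_eq_pow_sum]
    refine Finset.prod_congr rfl fun i hi => ?_
    rw [hn]; push_cast; ring
  have hsum : 2 + (∑ i ∈ Finset.Ioc (k + 1) (L - 1), 4 * 8 ^ (L - i - 1)) ≤ 8 ^ m := by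
    have hre : (∑ i ∈ Finset.Ioc (k + 1) (L - 1), 4 * 8 ^ (L - i - 1))
        = 4 * ∑ i ∈ Finset.Ioc (k + 1) ((k + 1) + m), 8 ^ ((k + 1) + m - i) := by
      rw [Finset.mul_sum]
      apply Finset.sum_congr
      · congr 1; omega
      · intro i hi
        simp only [Finset.mem_Ioc] at hi
        have : L - i - 1 = (k + 1) + m - i := by omega
        rw [this]
    rw [hre]
    have hg := geo7 (k + 1) m
    have h8 : 8 ≤ 8 ^ m := by
      calc (8 : ℕ) = 8 ^ 1 := (pow_one 8).symm
        _ ≤ 8 ^ m := Nat.pow_le_pow_right (by norm_num) hm1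
    omega
  have hxk1 : (x (k + 1) : ℝ) = (K : ℝ) ^ (8 ^ m) := by
    rw [hx, show L - (k + 1) - 1 = m by omega]
    push_cast
    rfl
  have hkey : P * 8 * Real.sqrt K * C ≤ (x (k + 1) : ℝ) := by
    rw [hCeq, hxk1]
    set e : ℕ := ∑ i ∈ Finset.Ioc (k + 1) (L - 1), 4 * 8 ^ (L - i - 1) with he
    calc P * 8 * Real.sqrt K * (K : ℝ) ^ e
        ≤ (K : ℝ) * (K : ℝ) * (K : ℝ) ^ e := by
          gcongr
      _ = (K : ℝ) ^ (2 + e) := by rw [pow_add]; ring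
      _ ≤ (K : ℝ) ^ (8 ^ m) := pow_le_pow_right₀ hK1 hsum
  -- exponent inequality for the first conjunct
  have hABn : (0 : ℝ) ≤ A * B2 * (nn (k + 1) : ℝ) := by positivity
  have hstep := mul_le_mul_of_nonneg_right hkey hABn
  have hstep2 := mul_le_mul_of_nonneg_left hstep (inv_nonneg.mpr hPpos.le)
  have hexp1 : 4 * Real.sqrt K * A * B + 4 * Real.sqrt K * A * B
      ≤ (8 : ℝ) ^ (-((L * (k + 2) : ℕ) : ℝ)) * (nn (k + 1) : ℝ) * A2 * B2 := by
    rw [hrw8, hA2split, hBsplit]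
    calc 4 * Real.sqrt K * A * (B2 * ((nn (k + 1) : ℝ) * C))
          + 4 * Real.sqrt K * A * (B2 * ((nn (k + 1) : ℝ) * C))
        = P⁻¹ * (P * 8 * Real.sqrt K * C * (A * B2 * (nn (k + 1) : ℝ))) := by
          field_simp
          ring
      _ ≤ P⁻¹ * ((x (k + 1) : ℝ) * (A * B2 * (nn (k + 1) : ℝ))) := hstep2
      _ = P⁻¹ * (nn (k + 1) : ℝ) * (A * (x (k + 1) : ℝ)) * B2 := by ring
  constructor
  · rw [hΔ, hsub1, ← hA]
    have hsq : ((2 : ℝ) ^ (4 * Real.sqrt K * A * B)) ^ 2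
        = (2 : ℝ) ^ (4 * Real.sqrt K * A * B + 4 * Real.sqrt K * A * B) := by
      rw [Real.rpow_add (by norm_num), pow_two]
    rw [hsq]
    exact Real.rpow_le_rpow_of_exponent_le one_le_two hexp1
  · apply Real.rpow_le_rpow_of_exponent_le one_le_two
    rw [hΘ, show k + 1 - 1 = k from rfl, show k + 1 + 1 = k + 2 from rfl, ← hA2, ← hB2]
    have h8le : (8 : ℝ) ^ (-((L * (k + 2) : ℕ) : ℝ)) ≤ (8 : ℝ) ^ (-((L * (k + 1) : ℕ) : ℝ)) := by
      apply Real.rpow_le_rpow_of_exponent_le (by norm_num)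
      have h : (L * (k + 1) : ℕ) ≤ (L * (k + 2) : ℕ) := Nat.mul_le_mul_left _ (by omega)
      have hc : ((L * (k + 1) : ℕ) : ℝ) ≤ ((L * (k + 2) : ℕ) : ℝ) := by exact_mod_cast h
      linarith
    calc (8 : ℝ) ^ (-((L * (k + 2) : ℕ) : ℝ)) * (nn (k + 1) : ℝ) * A2 * B2
        ≤ (8 : ℝ) ^ (-((L * (k + 1) : ℕ) : ℝ)) * (nn (k + 1) : ℝ) * A2 * B2 := by
          have := mul_le_mul_of_nonneg_right (mul_le_mul_of_nonneg_right
            (mul_le_mul_of_nonneg_right h8le hnpos.le) hA2pos.le) hB2pos.le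
          linarith
      _ = (nn (k + 1) : ℝ) * ((8 : ℝ) ^ (-((L * (k + 1) : ℕ) : ℝ)) * A2 * B2) := by ring
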